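/- For every n ≥ 1 and all n×n complex matrices Z, W with ‖Z‖ < 1 and ‖W‖ < 1 (operator norm), the matrix 2I − Z − W is invertible and the NC parallel sum M := (I − Z)(2I − Z − W)⁻¹(I − W) is accretive: M + M* is positive semidefinite, where M* denotes the conjugate transpose. Equivalently, Re (v* M v) ≥ 0 for every vector v ∈ ℂⁿ. -/

import Mathlib

open scoped Matrix ComplexOrder

/-- The ℓ²→ℓ² operator norm of a square complex matrix. -/
noncomputable def opNorm {m : Type*} [Fintype m] [DecidableEq m] (M : Matrix m m ℂ) : ℝ :=
  ‖Matrix.toEuclideanCLM (𝕜 := ℂ) M‖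

open Matrix in
private lemma quad_conjTranspose_eq_star {n : ℕ} (M : Matrix (Fin n) (Fin n) ℂ)
    (v : Fin n → ℂ) :
    star v ⬝ᵥ Mᴴ *ᵥ v = star (star v ⬝ᵥ M *ᵥ v) := by
  rw [star_dotProduct, star_mulVec, conjTranspose_conjTranspose, dotProduct_mulVec]

open Matrix in
private lemma quad_re_conjTranspose {n : ℕ} (M : Matrix (Fin n) (Fin n) ℂ)
    (v : Fin n → ℂ) :
    (star v ⬝ᵥ Mᴴ *ᵥ v).re = (star v ⬝ᵥ M *ᵥ v).re := by
  rw [quad_conjTranspose_eq_star]; simp [Complex.star_def]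

open Matrix in
private lemma acc_inv {n : ℕ} (M : Matrix (Fin n) (Fin n) ℂ) (hM : IsUnit M)
    (h : ∀ v : Fin n → ℂ, 0 ≤ (star v ⬝ᵥ M *ᵥ v).re) :
    ∀ v : Fin n → ℂ, 0 ≤ (star v ⬝ᵥ M⁻¹ *ᵥ v).re := by
  intro v
  have hdet : IsUnit M.det := (Matrix.isUnit_iff_isUnit_det M).mp hM
  have hv : M *ᵥ (M⁻¹ *ᵥ v) = v := by
    rw [mulVec_mulVec, Matrix.mul_nonsing_inv _ hdet, one_mulVec]
  have key : star (M *ᵥ (M⁻¹ *ᵥ v)) ⬝ᵥ (M⁻¹ *ᵥ v) =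
      star (M⁻¹ *ᵥ v) ⬝ᵥ Mᴴ *ᵥ (M⁻¹ *ᵥ v) := by
    rw [star_mulVec, ← dotProduct_mulVec]
  rw [hv] at key
  rw [key, quad_re_conjTranspose]
  exact h _

open Matrix in
private lemma one_sub_lower {n : ℕ} (Z : Matrix (Fin n) (Fin n) ℂ) (v : Fin n → ℂ) :
    (1 - opNorm Z) * ‖(WithLp.equiv 2 (Fin n → ℂ)).symm v‖ ^ 2 ≤
      (star v ⬝ᵥ (1 - Z) *ᵥ v).re := by
  set x : EuclideanSpace ℂ (Fin n) := (WithLp.equiv 2 (Fin n → ℂ)).symm v with hx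
  set T := Matrix.toEuclideanCLM (𝕜 := ℂ) Z with hT
  have hTx : T x = (WithLp.equiv 2 (Fin n → ℂ)).symm (Z *ᵥ v) := by
    rw [hx, hT]; rfl
  have h1 : star v ⬝ᵥ (1 - Z) *ᵥ v = inner ℂ x x - inner ℂ x (T x) := by
    rw [sub_mulVec, one_mulVec, dotProduct_sub, hTx, hx,
      WithLp.equiv_symm_apply, EuclideanSpace.inner_toLp_toLp, EuclideanSpace.inner_toLp_toLp,
      dotProduct_comm (star v), dotProduct_comm (star v)]
  have h2 : (inner ℂ x x : ℂ).re = ‖x‖ ^ 2 := by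
    rw [← RCLike.re_to_complex, inner_self_eq_norm_sq]
  have h3 : (inner ℂ x (T x) : ℂ).re ≤ opNorm Z * ‖x‖ ^ 2 := by
    calc (inner ℂ x (T x) : ℂ).re ≤ ‖(inner ℂ x (T x) : ℂ)‖ := by
          rw [← RCLike.re_to_complex]; exact RCLike.re_le_norm _
      _ ≤ ‖x‖ * ‖T x‖ := norm_inner_le_norm _ _
      _ ≤ ‖x‖ * (‖T‖ * ‖x‖) := by
          have := T.le_opNorm x
          nlinarith [norm_nonneg x]
      _ = opNorm Z * ‖x‖ ^ 2 := by rw [opNorm, ← hT]; ring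
  rw [h1, Complex.sub_re, h2]
  nlinarith

open Matrix in
private lemma isUnit_of_pos_re {n : ℕ} (M : Matrix (Fin n) (Fin n) ℂ)
    (h : ∀ v : Fin n → ℂ, v ≠ 0 → 0 < (star v ⬝ᵥ M *ᵥ v).re) : IsUnit M := by
  rw [Matrix.isUnit_iff_isUnit_det, isUnit_iff_ne_zero]
  intro hdet
  obtain ⟨v, hv, hMv⟩ := (Matrix.exists_mulVec_eq_zero_iff).mpr hdet
  have := h v hv
  rw [hMv, dotProduct_zero] at this
  simp at this

open Matrix in
private lemma norm_symm_sq_pos {n : ℕ} (v : Fin n → ℂ) (hv : v ≠ 0) :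
    0 < ‖(WithLp.equiv 2 (Fin n → ℂ)).symm v‖ ^ 2 := by
  have hx : (WithLp.equiv 2 (Fin n → ℂ)).symm v ≠ 0 := by
    intro h
    exact hv (by simpa using congrArg (WithLp.equiv 2 (Fin n → ℂ)) h)
  exact pow_pos (norm_pos_iff.mpr hx) 2

/-- **Accretivity of the NC parallel sum.** For strict contractions `Z, W`, the
matrix `2I − Z − W` is invertible and `M = (I − Z)(2I − Z − W)⁻¹(I − W)` is
accretive: `M + M*` is positive semidefinite; equivalently `Re(v*Mv) ≥ 0`. -/
theorem nc_parallel_sum_accretive (n : ℕ) (hn : 1 ≤ n)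
    (Z W : Matrix (Fin n) (Fin n) ℂ) (hZ : opNorm Z < 1) (hW : opNorm W < 1) :
    IsUnit (2 - Z - W) ∧
    (((1 - Z) * (2 - Z - W)⁻¹ * (1 - W)) +
      ((1 - Z) * (2 - Z - W)⁻¹ * (1 - W))ᴴ).PosSemidef ∧
    ∀ v : Fin n → ℂ, 0 ≤
      (dotProduct (star v)
        (((1 - Z) * (2 - Z - W)⁻¹ * (1 - W)).mulVec v)).re := by
  open Matrix in
  set A : Matrix (Fin n) (Fin n) ℂ := 1 - Z with hA
  set B : Matrix (Fin n) (Fin n) ℂ := 1 - W with hB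
  have hS : (2 : Matrix (Fin n) (Fin n) ℂ) - Z - W = A + B := by rw [hA, hB, ← one_add_one_eq_two]; abel
  have hZ0 : (0:ℝ) ≤ opNorm Z := norm_nonneg _
  have hW0 : (0:ℝ) ≤ opNorm W := norm_nonneg _
  -- strict positivity of real parts
  have hApos : ∀ v : Fin n → ℂ, v ≠ 0 → 0 < (star v ⬝ᵥ A *ᵥ v).re := fun v hv =>
    lt_of_lt_of_le (by nlinarith [norm_symm_sq_pos v hv]) (one_sub_lower Z v)
  have hBpos : ∀ v : Fin n → ℂ, v ≠ 0 → 0 < (star v ⬝ᵥ B *ᵥ v).re := fun v hv =>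
    lt_of_lt_of_le (by nlinarith [norm_symm_sq_pos v hv]) (one_sub_lower W v)
  have hAnn : ∀ v : Fin n → ℂ, 0 ≤ (star v ⬝ᵥ A *ᵥ v).re := fun v =>
    le_trans (by nlinarith [sq_nonneg ‖(WithLp.equiv 2 (Fin n → ℂ)).symm v‖]) (one_sub_lower Z v)
  have hBnn : ∀ v : Fin n → ℂ, 0 ≤ (star v ⬝ᵥ B *ᵥ v).re := fun v =>
    le_trans (by nlinarith [sq_nonneg ‖(WithLp.equiv 2 (Fin n → ℂ)).symm v‖]) (one_sub_lower W v)
  have hAu : IsUnit A := isUnit_of_pos_re A hApos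
  have hBu : IsUnit B := isUnit_of_pos_re B hBpos
  have hSu : IsUnit (A + B) := by
    refine isUnit_of_pos_re _ (fun v hv => ?_)
    rw [add_mulVec, dotProduct_add, Complex.add_re]
    exact add_pos (hApos v hv) (hBpos v hv)
  have hAdet : IsUnit A.det := (Matrix.isUnit_iff_isUnit_det A).mp hAu
  have hBdet : IsUnit B.det := (Matrix.isUnit_iff_isUnit_det B).mp hBu
  set M : Matrix (Fin n) (Fin n) ℂ := A * (A + B)⁻¹ * B with hM
  have hMeq : (1 - Z) * (2 - Z - W)⁻¹ * (1 - W) = M := by rw [hM, hS]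
  have hMu : IsUnit M := (hAu.mul (Matrix.isUnit_nonsing_inv_iff.mpr hSu)).mul hBu
  have hMdet : IsUnit M.det := (Matrix.isUnit_iff_isUnit_det M).mp hMu
  -- M⁻¹ = B⁻¹ + A⁻¹
  have hMinv : M⁻¹ = B⁻¹ + A⁻¹ := by
    rw [hM, Matrix.mul_inv_rev, Matrix.mul_inv_rev, Matrix.nonsing_inv_nonsing_inv _
      ((Matrix.isUnit_iff_isUnit_det _).mp hSu), ← Matrix.mul_assoc,
      Matrix.mul_add, Matrix.add_mul, Matrix.mul_assoc B⁻¹ A A⁻¹,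
      Matrix.mul_nonsing_inv _ hAdet, Matrix.mul_one,
      Matrix.nonsing_inv_mul _ hBdet, Matrix.one_mul]
  -- M⁻¹ accretive
  have hMinvAcc : ∀ v : Fin n → ℂ, 0 ≤ (star v ⬝ᵥ M⁻¹ *ᵥ v).re := by
    intro v
    rw [hMinv, add_mulVec, dotProduct_add, Complex.add_re]
    exact add_nonneg (acc_inv B hBu hBnn v) (acc_inv A hAu hAnn v)
  -- M accretive
  have hMAcc : ∀ v : Fin n → ℂ, 0 ≤ (star v ⬝ᵥ M *ᵥ v).re := by
    have := acc_inv M⁻¹ (Matrix.isUnit_nonsing_inv_iff.mpr hMu) hMinvAcc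
    rwa [Matrix.nonsing_inv_nonsing_inv _ hMdet] at this
  refine ⟨hS ▸ hSu, ?_, ?_⟩
  · rw [hMeq]
    rw [Matrix.posSemidef_iff_dotProduct_mulVec]
    constructor
    · unfold Matrix.IsHermitian
      rw [conjTranspose_add, conjTranspose_conjTranspose, add_comm]
    · intro v
      rw [add_mulVec, dotProduct_add, quad_conjTranspose_eq_star]
      rw [Complex.nonneg_iff]
      constructor
      · simp only [Complex.add_re, Complex.star_def, Complex.conj_re]
        have := hMAcc v
        linarith
      · simp [Complex.star_def]
  · intro v
    rw [hMeq]
    exact hMAcc v
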